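/- For every w ∈ ℂ and real r > 0, the matrix M = [[iw/r, i(r − w·conj(w)/r)],[i/r, −i·conj(w)/r]] has determinant 1 and real trace 2·Im(w)/r in absolute value (namely tr M = −2·Im(w)/r); moreover, for every z ∈ ℂ with z ≠ conj(w), one has (M·z − w)·(z − conj(w)) = r². Consequently M maps the exterior {|z − conj(w)| > r} of its isometric circle into the interior {|ζ − w| < r} of the reflected circle. -/

import Mathlib

open Matrix Complex

/-- For every w ∈ ℂ and real r > 0, the matrix
M = [[iw/r, i(r − w·conj(w)/r)],[i/r, −i·conj(w)/r]] has determinant 1 and trace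
−2·Im(w)/r; moreover, for every z ∈ ℂ with z ≠ conj(w), one has
(M·z − w)·(z − conj(w)) = r². Consequently M maps the exterior {|z − conj(w)| > r} of
its isometric circle into the interior {|ζ − w| < r} of the reflected circle. -/
theorem stmt16 (w : ℂ) (r : ℝ) (hr : 0 < r) :
    let M : Matrix (Fin 2) (Fin 2) ℂ :=
      !![I * w / (r : ℂ), I * ((r : ℂ) - w * starRingEnd ℂ w / (r : ℂ));
         I / (r : ℂ), -I * starRingEnd ℂ w / (r : ℂ)]
    M.det = 1 ∧
    M.trace = (↑(-(2 * w.im) / r) : ℂ) ∧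
    (∀ z : ℂ, z ≠ starRingEnd ℂ w →
      ((M 0 0 * z + M 0 1) / (M 1 0 * z + M 1 1) - w) * (z - starRingEnd ℂ w) = (r : ℂ) ^ 2) ∧
    (∀ z : ℂ, ‖z - starRingEnd ℂ w‖ > r →
      ‖(M 0 0 * z + M 0 1) / (M 1 0 * z + M 1 1) - w‖ < r) := by
  intro M
  have hr0 : (r : ℂ) ≠ 0 := by exact_mod_cast hr.ne'
  have hdet : M.det = 1 := by
    simp only [M, Matrix.det_fin_two_of]
    field_simp
    ring_nf
    simp [Complex.I_sq]
    try ring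
  have key : ∀ z : ℂ, z ≠ starRingEnd ℂ w →
      ((M 0 0 * z + M 0 1) / (M 1 0 * z + M 1 1) - w) * (z - starRingEnd ℂ w) = (r : ℂ) ^ 2 := by
    intro z hz
    have hzw : z - starRingEnd ℂ w ≠ 0 := sub_ne_zero.mpr hz
    simp only [M, Matrix.of_apply, Matrix.cons_val', Matrix.cons_val_zero, Matrix.cons_val_one,
      Matrix.head_cons, Matrix.empty_val', Matrix.cons_val_fin_one, Matrix.head_fin_const]
    have hden0 : I / (r : ℂ) * z + -I * starRingEnd ℂ w / (r : ℂ) ≠ 0 := by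
      have h : I / (r : ℂ) * z + -I * starRingEnd ℂ w / (r : ℂ)
          = I * (z - starRingEnd ℂ w) / (r : ℂ) := by ring
      rw [h]
      exact div_ne_zero (mul_ne_zero I_ne_zero hzw) hr0
    have e : I * w / (r : ℂ) * z + I * ((r : ℂ) - w * starRingEnd ℂ w / (r : ℂ))
        = (w + (r : ℂ) ^ 2 / (z - starRingEnd ℂ w)) *
          (I / (r : ℂ) * z + -I * starRingEnd ℂ w / (r : ℂ)) := by
      field_simp
      ring
    rw [e, mul_div_cancel_right₀ _ hden0, add_sub_cancel_left, div_mul_cancel₀ _ hzw]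
  refine ⟨hdet, ?_, key, ?_⟩
  · simp only [M, Matrix.trace_fin_two_of]
    have hc := Complex.sub_conj w
    push_cast
    field_simp
    push_cast at hc ⊢
    linear_combination (2 * (w.im : ℂ)) * Complex.I_sq + I * hc
  · intro z hz
    have h1 : 0 < ‖z - starRingEnd ℂ w‖ := lt_trans hr hz
    have hne : z ≠ starRingEnd ℂ w :=
      sub_ne_zero.mp (norm_ne_zero_iff.mp h1.ne')
    have h := key z hne
    have habs := congrArg norm h
    rw [norm_mul] at habs
    have hr2 : ‖(r : ℂ) ^ 2‖ = r ^ 2 := by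
      simp [norm_pow, abs_of_pos hr]
    rw [hr2] at habs
    have heq : ‖(M 0 0 * z + M 0 1) / (M 1 0 * z + M 1 1) - w‖
        = r ^ 2 / ‖z - starRingEnd ℂ w‖ := by
      field_simp [h1.ne']
      rw [mul_comm z (M 1 0)]
      linarith [habs]
    rw [heq, div_lt_iff₀ h1]
    nlinarith [hz]
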